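/- Let C ⊂ ℝˡ be closed convex, ȳ ∈ C, and w ∈ T_C(ȳ) (tangent cone of the convex set). Then for λ ∈ ℝˡ, the inclusion λ ∈ N_C(ȳ; w) (directional limiting normal cone) holds if and only if λ ∈ N_C(ȳ) and ⟨λ, w⟩ = 0. -/

import Mathlib

open Filter Topology
open scoped RealInnerProductSpace

/-- The contingent (Bouligand) cone. -/
def contTangent {E : Type*} [NormedAddCommGroup E] [NormedSpace ℝ E]
    (Ω : Set E) (z : E) : Set E :=
  {u | ∃ (t : ℕ → ℝ) (w : ℕ → E), (∀ k, 0 < t k) ∧ Tendsto t atTop (𝓝 0) ∧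
    Tendsto w atTop (𝓝 u) ∧ ∀ k, z + t k • w k ∈ Ω}

/-- The regular (Fréchet) normal cone: the polar of the contingent cone
(for a convex set this is the normal cone of convex analysis). -/
def regNormal {E : Type*} [NormedAddCommGroup E] [InnerProductSpace ℝ E]
    (Ω : Set E) (z : E) : Set E :=
  {v | ∀ u ∈ contTangent Ω z, ⟪v, u⟫ ≤ (0 : ℝ)}

/-- The directional limiting normal cone in direction `w`. -/
def dirLimNormal {E : Type*} [NormedAddCommGroup E] [InnerProductSpace ℝ E]
    (Ω : Set E) (z w : E) : Set E :=
  {lam | ∃ (t : ℕ → ℝ) (ws lams : ℕ → E), (∀ k, 0 < t k) ∧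
    Tendsto t atTop (𝓝 0) ∧ Tendsto ws atTop (𝓝 w) ∧ Tendsto lams atTop (𝓝 lam) ∧
    ∀ k, z + t k • ws k ∈ Ω ∧ lams k ∈ regNormal Ω (z + t k • ws k)}

variable {E : Type*} [NormedAddCommGroup E] [InnerProductSpace ℝ E]

lemma sub_mem_contTangent {C : Set E} (hconv : Convex ℝ C) {z c : E}
    (hz : z ∈ C) (hc : c ∈ C) : c - z ∈ contTangent C z := by
  refine ⟨fun k => (1/2)^k, fun _ => c - z, fun k => by positivity,
    tendsto_pow_atTop_nhds_zero_of_lt_one (by norm_num) (by norm_num),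
    tendsto_const_nhds, fun k => ?_⟩
  have ht1 : ((1:ℝ)/2)^k ≤ 1 := pow_le_one₀ (by norm_num) (by norm_num)
  have ht0 : (0:ℝ) ≤ (1/2)^k := by positivity
  have := hconv hz hc (a := 1 - (1/2)^k) (b := (1/2)^k) (by linarith) ht0 (by ring)
  convert this using 1
  module

lemma mem_regNormal_iff {C : Set E} (hconv : Convex ℝ C) {z : E} (hz : z ∈ C) (v : E) :
    v ∈ regNormal C z ↔ ∀ c ∈ C, ⟪v, c - z⟫ ≤ (0:ℝ) := by
  constructor
  · intro hv c hc
    exact hv _ (sub_mem_contTangent hconv hz hc)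
  · rintro hv u ⟨t, ws, ht, ht0, hws, hmem⟩
    have key : ∀ k, ⟪v, ws k⟫ ≤ (0:ℝ) := by
      intro k
      have := hv _ (hmem k)
      have h2 : ⟪v, (z + t k • ws k) - z⟫ = t k * ⟪v, ws k⟫ := by
        rw [add_sub_cancel_left, real_inner_smul_right]
      nlinarith [ht k]
    have : Tendsto (fun k => ⟪v, ws k⟫) atTop (𝓝 ⟪v, u⟫) :=
      (tendsto_const_nhds (x := v)).inner hws
    exact le_of_tendsto this (Eventually.of_forall key)

lemma exists_proj [CompleteSpace E] {C : Set E} (hCc : IsClosed C) (hconv : Convex ℝ C)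
    {q : E} (hq : q ∈ C) (x : E) :
    ∃ y ∈ C, (∀ c ∈ C, ⟪x - y, c - y⟫ ≤ (0:ℝ)) ∧ ‖x - y‖ ≤ ‖x - q‖ := by
  obtain ⟨y, hyC, hy⟩ := exists_norm_eq_iInf_of_complete_convex ⟨q, hq⟩ hCc.isComplete hconv x
  refine ⟨y, hyC, (norm_eq_iInf_iff_real_inner_le_zero hconv hyC).mp hy, ?_⟩
  rw [hy]
  exact ciInf_le ⟨0, by rintro b ⟨i, rfl⟩; exact norm_nonneg _⟩ (⟨q, hq⟩ : C)

/-- for a closed convex set, directional limiting normals in a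
tangent direction `w` are exactly the normals orthogonal to `w`. -/
theorem dirLimNormal_convex_char {l : ℕ}
    (C : Set (EuclideanSpace ℝ (Fin l))) (hCc : IsClosed C) (hCconv : Convex ℝ C)
    (yb : EuclideanSpace ℝ (Fin l)) (hyb : yb ∈ C)
    (w : EuclideanSpace ℝ (Fin l)) (hw : w ∈ contTangent C yb)
    (lam : EuclideanSpace ℝ (Fin l)) :
    lam ∈ dirLimNormal C yb w ↔
      ((∀ c ∈ C, ⟪lam, c - yb⟫ ≤ (0 : ℝ)) ∧ ⟪lam, w⟫ = (0 : ℝ)) := by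
  constructor
  · rintro ⟨t, ws, lams, ht, ht0, hws, hlams, hmem⟩
    have hyk : ∀ k, yb + t k • ws k ∈ C := fun k => (hmem k).1
    have hNk : ∀ k, ∀ c ∈ C, ⟪lams k, c - (yb + t k • ws k)⟫ ≤ (0:ℝ) :=
      fun k => (mem_regNormal_iff hCconv (hyk k) _).mp (hmem k).2
    have hy_tendsto : Tendsto (fun k => yb + t k • ws k) atTop (𝓝 yb) := by
      have h1 : Tendsto (fun k => t k • ws k) atTop (𝓝 ((0:ℝ) • w)) := ht0.smul hws
      rw [zero_smul] at h1
      simpa using (tendsto_const_nhds (x := yb)).add h1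
    have hN : ∀ c ∈ C, ⟪lam, c - yb⟫ ≤ (0:ℝ) := by
      intro c hc
      have h2 : Tendsto (fun k => ⟪lams k, c - (yb + t k • ws k)⟫) atTop (𝓝 ⟪lam, c - yb⟫) :=
        hlams.inner (tendsto_const_nhds.sub hy_tendsto)
      exact le_of_tendsto h2 (Eventually.of_forall fun k => hNk k c hc)
    refine ⟨hN, le_antisymm ?_ ?_⟩
    · exact ((mem_regNormal_iff hCconv hyb lam).mpr hN) w hw
    · have key : ∀ k, (0:ℝ) ≤ ⟪lams k, ws k⟫ := by
        intro k
        have h3 := hNk k yb hyb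
        have h2 : ⟪lams k, yb - (yb + t k • ws k)⟫ = -(t k * ⟪lams k, ws k⟫) := by
          rw [show yb - (yb + t k • ws k) = -(t k • ws k) by abel, inner_neg_right,
            real_inner_smul_right]
        nlinarith [ht k]
      exact ge_of_tendsto (hlams.inner hws) (Eventually.of_forall key)
  · rintro ⟨hN, hperp⟩
    obtain ⟨t, u, ht, ht0, hu, huC⟩ := hw
    set ε : ℕ → ℝ := fun k => ‖u k - w‖ with hε
    set δ : ℕ → ℝ := fun k => Real.sqrt (ε k + t k) with hδ
    have hδpos : ∀ k, 0 < δ k :=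
      fun k => Real.sqrt_pos.mpr (add_pos_of_nonneg_of_pos (norm_nonneg _) (ht k))
    set s : ℕ → ℝ := fun k => t k * δ k with hs
    have hspos : ∀ k, 0 < s k := fun k => mul_pos (ht k) (hδpos k)
    set x : ℕ → EuclideanSpace ℝ (Fin l) := fun k => yb + t k • w + s k • lam with hx
    choose y hyC hyP hydist using fun k => exists_proj hCc hCconv (huC k) (x k)
    set lams : ℕ → EuclideanSpace ℝ (Fin l) := fun k => (s k)⁻¹ • (x k - y k) with hlams
    set ws : ℕ → EuclideanSpace ℝ (Fin l) := fun k => (t k)⁻¹ • (y k - yb) with hws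
    have hyeq : ∀ k, yb + t k • ws k = y k := by
      intro k
      simp only [hws, smul_inv_smul₀ (ht k).ne']
      abel
    have hkey : ∀ k, s k • lams k = x k - y k := by
      intro k; simp only [hlams, smul_inv_smul₀ (hspos k).ne']
    have hdecomp : ∀ k, y k - yb = t k • w + s k • (lam - lams k) := by
      intro k
      rw [smul_sub, hkey k]
      simp only [hx]
      abel
    -- δ tends to 0
    have hε0 : Tendsto ε atTop (𝓝 0) := by
      rw [hε]
      exact tendsto_iff_norm_sub_tendsto_zero.mp hu
    have hδ0 : Tendsto δ atTop (𝓝 0) := by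
      have h1 : Tendsto (fun k => ε k + t k) atTop (𝓝 0) := by
        simpa using hε0.add ht0
      have := (Real.continuous_sqrt.tendsto 0).comp h1
      simpa [hδ, Real.sqrt_zero, Function.comp_def] using this
    -- norm bound on lams
    have hxd : ∀ k, ‖x k - (yb + t k • u k)‖ ≤ t k * ε k + s k * ‖lam‖ := by
      intro k
      have heq : x k - (yb + t k • u k) = t k • (w - u k) + s k • lam := by
        simp only [hx]; module
      rw [heq]
      calc ‖t k • (w - u k) + s k • lam‖ ≤ ‖t k • (w - u k)‖ + ‖s k • lam‖ := norm_add_le _ _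
        _ = t k * ε k + s k * ‖lam‖ := by
            rw [norm_smul, norm_smul, Real.norm_eq_abs, Real.norm_eq_abs,
              abs_of_pos (ht k), abs_of_pos (hspos k), hε, norm_sub_rev]
    have hlamsnorm : ∀ k, ‖lams k‖ ≤ δ k + ‖lam‖ := by
      intro k
      have hsk : s k = t k * δ k := rfl
      have hδk : δ k ^ 2 = ε k + t k := Real.sq_sqrt (add_nonneg (norm_nonneg _) (ht k).le)
      have h1 : ‖lams k‖ = (s k)⁻¹ * ‖x k - y k‖ := by
        have : lams k = (s k)⁻¹ • (x k - y k) := rfl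
        rw [this, norm_smul, Real.norm_eq_abs, abs_of_pos (inv_pos.mpr (hspos k))]
      have h2 : ε k ≤ δ k ^ 2 := by rw [hδk]; linarith [ht k]
      have h3 : ‖x k - y k‖ ≤ t k * ε k + s k * ‖lam‖ := le_trans (hydist k) (hxd k)
      rw [h1]
      rw [inv_mul_le_iff₀ (hspos k)]
      have h4 : t k * ε k ≤ s k * δ k := by
        rw [hsk]
        have := ht k
        nlinarith [hδpos k]
      calc ‖x k - y k‖ ≤ t k * ε k + s k * ‖lam‖ := h3
        _ ≤ s k * δ k + s k * ‖lam‖ := by linarith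
        _ = s k * (δ k + ‖lam‖) := by ring
    -- inner product lower bound
    have hll : ∀ k, ‖lam‖ ^ 2 ≤ ⟪lam, lams k⟫ := by
      intro k
      have h1 := hN (y k) (hyC k)
      have h2 : ⟪lam, y k - yb⟫ = s k * (‖lam‖^2 - ⟪lam, lams k⟫) := by
        rw [hdecomp k, inner_add_right, real_inner_smul_right, real_inner_smul_right,
          inner_sub_right, hperp, real_inner_self_eq_norm_sq]
        ring
      rw [h2] at h1
      nlinarith [hspos k]
    have hsub : ∀ k, ‖lams k - lam‖ ^ 2 ≤ δ k ^ 2 + 2 * δ k * ‖lam‖ := by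
      intro k
      have h1 := norm_sub_sq_real (x := lams k) (y := lam)
      have h2 : ⟪lams k, lam⟫ = ⟪lam, lams k⟫ := real_inner_comm _ _
      have h3 := hlamsnorm k
      have h4 := hll k
      nlinarith [norm_nonneg (lams k), norm_nonneg lam, hδpos k]
    -- lams tends to lam
    have hlamsT : Tendsto lams atTop (𝓝 lam) := by
      rw [tendsto_iff_norm_sub_tendsto_zero]
      apply squeeze_zero (fun k => norm_nonneg _)
        (g := fun k => Real.sqrt (δ k ^ 2 + 2 * δ k * ‖lam‖))
      · intro k
        rw [← Real.sqrt_sq (norm_nonneg (lams k - lam))]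
        exact Real.sqrt_le_sqrt (hsub k)
      · have h1 : Tendsto (fun k => δ k ^ 2 + 2 * δ k * ‖lam‖) atTop (𝓝 0) := by
          have := ((hδ0.pow 2).add ((hδ0.const_mul 2).mul_const ‖lam‖))
          simpa using this
        have := (Real.continuous_sqrt.tendsto 0).comp h1
        simpa [Real.sqrt_zero, Function.comp_def] using this
    -- ws tends to w
    have hws_eq : ∀ k, ws k = w + δ k • (lam - lams k) := by
      intro k
      rw [hws]
      simp only
      have hsk : s k = t k * δ k := rfl
      rw [hdecomp k, smul_add, inv_smul_smul₀ (ht k).ne', smul_smul, hsk,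
        ← mul_assoc, inv_mul_cancel₀ (ht k).ne', one_mul]
    have hwsT : Tendsto ws atTop (𝓝 w) := by
      have h1 : Tendsto (fun k => lam - lams k) atTop (𝓝 (lam - lam)) :=
        tendsto_const_nhds.sub hlamsT
      rw [sub_self] at h1
      have h2 : Tendsto (fun k => δ k • (lam - lams k)) atTop (𝓝 ((0:ℝ) • (0:EuclideanSpace ℝ (Fin l)))) :=
        hδ0.smul h1
      rw [zero_smul] at h2
      have := (tendsto_const_nhds (x := w)).add h2
      rw [add_zero] at this
      have heq : ws = fun k => w + δ k • (lam - lams k) := funext hws_eq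
      rw [heq]
      exact this
    refine ⟨t, ws, lams, ht, ht0, hwsT, hlamsT, fun k => ⟨?_, ?_⟩⟩
    · rw [hyeq k]; exact hyC k
    · rw [hyeq k]
      refine (mem_regNormal_iff hCconv (hyC k) _).mpr fun c hc => ?_
      have : lams k = (s k)⁻¹ • (x k - y k) := rfl
      rw [this, real_inner_smul_left]
      exact mul_nonpos_of_nonneg_of_nonpos (le_of_lt (inv_pos.mpr (hspos k))) (hyP k c hc)
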